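/- For p ∈ (0,1), the value (1 + 1/p + p) - (√p + 1/√p)√(p + 1/p) lies strictly between 0 and p. -/

import Mathlib

/-- For `p ∈ (0,1)`, the Bohr radius `(1 + 1/p + p) - (√p + 1/√p)√(p + 1/p)` lies strictly
between `0` and `p`. -/
theorem stmt9 (p : ℝ) (hp : p ∈ Set.Ioo (0:ℝ) 1) :
    0 < (1 + 1 / p + p) - (Real.sqrt p + 1 / Real.sqrt p) * Real.sqrt (p + 1 / p) ∧
      (1 + 1 / p + p) - (Real.sqrt p + 1 / Real.sqrt p) * Real.sqrt (p + 1 / p) < p := by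
  obtain ⟨hp0, hp1⟩ := hp
  have hs : 0 < Real.sqrt p := Real.sqrt_pos.mpr hp0
  have hsq : Real.sqrt p ^ 2 = p := Real.sq_sqrt hp0.le
  have hA : 0 < p + 1 / p := by positivity
  have hAs : Real.sqrt (p + 1 / p) ^ 2 = p + 1 / p := Real.sq_sqrt hA.le
  have hApos : 0 < Real.sqrt (p + 1 / p) := Real.sqrt_pos.mpr hA
  have hup : p * (1 / p) = 1 := by field_simp
  set t := (Real.sqrt p + 1 / Real.sqrt p) * Real.sqrt (p + 1 / p) with ht
  have htpos : 0 < t := by positivity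
  have h1 : (Real.sqrt p + 1 / Real.sqrt p) ^ 2 = p + 2 + 1 / p := by
    have hs' : Real.sqrt p ≠ 0 := ne_of_gt hs
    field_simp
    rw [hsq]; ring
  have ht2 : t ^ 2 = (p + 2 + 1 / p) * (p + 1 / p) := by
    rw [ht, mul_pow, h1, hAs]
  constructor
  · nlinarith [ht2, htpos, hp0, sq_nonneg (t - (1 + 1 / p + p))]
  · nlinarith [ht2, htpos, hup, hp0, sq_nonneg (p + 1)]
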